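/- Suppose δ < 1 and u₂ < 1. Let d = (1−δ)θ(1−u₂)β²·((((γk₃+κu₄)k₄ + φ(k₃u₅+τu₄))θ + u₃k₂(k₄κ+τφ))α − k₁k₂k₃k₄k₅) and f = θ·(((1−u₂)μ + u₁(1−δ))·((ακλ' + k₃k₅λ)k₄ + αφλ'τ)·βθ − k₁k₂k₃k₄k₅·μ·(μ+u₁)). Then d < 0, and R₀ > 1 if and only if f·d < 0, where R₀ = θβk₆(μ(1−u₂)+(1−δ)u₁)/(k₁k₂μ). -/

import Mathlib

open Real Filter Polynomial Matrix

set_option maxHeartbeats 1000000 in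
theorem stmt13
    (lam lam' mu mu' beta alpha theta gamma phi kappa tau : ℝ)
    (delta u1 u2 u3 u4 u5 : ℝ)
    (hlam : 0 < lam) (hlam' : 0 < lam') (hmu : 0 < mu) (hmu' : 0 < mu')
    (hbeta : 0 < beta) (halpha : 0 < alpha) (htheta : 0 < theta)
    (hgamma : 0 < gamma) (hphi : 0 < phi) (hkappa : 0 < kappa) (htau : 0 < tau)
    (hdelta : delta ∈ Set.Icc (0:ℝ) 1) (hu1 : u1 ∈ Set.Icc (0:ℝ) 1)
    (hu2 : u2 ∈ Set.Icc (0:ℝ) 1) (hu3 : u3 ∈ Set.Icc (0:ℝ) 1)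
    (hu4 : u4 ∈ Set.Icc (0:ℝ) 1) (hu5 : u5 ∈ Set.Icc (0:ℝ) 1)
    (k1 k2 k3 k4 k5 k6 : ℝ)
    (hk1 : k1 = theta + u3 + mu) (hk2 : k2 = gamma + u4 + u5 + mu + mu')
    (hk3 : k3 = kappa + tau + mu) (hk4 : k4 = phi + mu + mu') (hk5 : k5 = mu + alpha)
    (hk6 : k6 = lam / (u1 + mu) + alpha * lam' * kappa / ((u1 + mu) * k3 * k5)
      + alpha * lam' * phi * tau / ((u1 + mu) * k3 * k4 * k5))
    (hdlt : delta < 1) (hu2lt : u2 < 1)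
    (d f R0 : ℝ)
    (hd : d = (1 - delta) * theta * (1 - u2) * beta ^ 2 *
      ((((gamma * k3 + kappa * u4) * k4 + phi * (k3 * u5 + tau * u4)) * theta
        + u3 * k2 * (k4 * kappa + tau * phi)) * alpha - k1 * k2 * k3 * k4 * k5))
    (hf : f = theta * (((1 - u2) * mu + u1 * (1 - delta)) *
      ((alpha * kappa * lam' + k3 * k5 * lam) * k4 + alpha * phi * lam' * tau) * beta * theta
      - k1 * k2 * k3 * k4 * k5 * mu * (mu + u1)))
    (hR0 : R0 = theta * beta * k6 * (mu * (1 - u2) + (1 - delta) * u1) / (k1 * k2 * mu)) :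
    d < 0 ∧ (1 < R0 ↔ f * d < 0) := by

  obtain ⟨hd0, hd1⟩ := hdelta
  obtain ⟨hu10, hu11⟩ := hu1
  obtain ⟨hu20, hu21⟩ := hu2
  obtain ⟨hu30, hu31⟩ := hu3
  obtain ⟨hu40, hu41⟩ := hu4
  obtain ⟨hu50, hu51⟩ := hu5
  have hk1p : 0 < k1 := by rw [hk1]; linarith
  have hk2p : 0 < k2 := by rw [hk2]; linarith
  have hk3p : 0 < k3 := by rw [hk3]; linarith
  have hk4p : 0 < k4 := by rw [hk4]; linarith
  have hk5p : 0 < k5 := by rw [hk5]; linarith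
  have hP : (0:ℝ) < u1 + mu := by linarith
  -- B < k1*k2*k3*k4
  have hA : kappa * k4 + phi * tau ≤ k3 * k4 := by
    rw [hk3, hk4]; nlinarith [mul_nonneg htau.le hmu.le, mul_nonneg htau.le hmu'.le,
      mul_nonneg hmu.le hphi.le, mul_nonneg hmu.le hmu'.le, sq_nonneg mu]
  have hphile : phi ≤ k4 := by rw [hk4]; linarith
  have hX : ((gamma * k3 + kappa * u4) * k4 + phi * (k3 * u5 + tau * u4)) ≤ k2 * k3 * k4 := by
    have h1 : u4 * (kappa * k4 + phi * tau) ≤ u4 * (k3 * k4) :=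
      mul_le_mul_of_nonneg_left hA hu40
    have h2 : u5 * (k3 * phi) ≤ u5 * (k3 * k4) :=
      mul_le_mul_of_nonneg_left (mul_le_mul_of_nonneg_left hphile hk3p.le) hu50
    have h3 : 0 ≤ mu * (k3 * k4) := by positivity
    have h4 : 0 ≤ mu' * (k3 * k4) := by positivity
    rw [hk2]; nlinarith [h1, h2, h3, h4]
  have hX2 : u3 * k2 * (k4 * kappa + tau * phi) ≤ u3 * k2 * (k3 * k4) := by
    have h0 : 0 ≤ u3 * k2 := mul_nonneg hu30 hk2p.le
    have : k4 * kappa + tau * phi ≤ k3 * k4 := by linarith [hA]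
    exact mul_le_mul_of_nonneg_left this h0
  have hB : (((gamma * k3 + kappa * u4) * k4 + phi * (k3 * u5 + tau * u4)) * theta
        + u3 * k2 * (k4 * kappa + tau * phi)) < k1 * k2 * k3 * k4 := by
    have h1 : ((gamma * k3 + kappa * u4) * k4 + phi * (k3 * u5 + tau * u4)) * theta
        ≤ k2 * k3 * k4 * theta := mul_le_mul_of_nonneg_right hX htheta.le
    have h2 : 0 < mu * (k2 * k3 * k4) := by positivity
    rw [hk1]; nlinarith [h1, hX2, h2]
  have hBnn : 0 ≤ (((gamma * k3 + kappa * u4) * k4 + phi * (k3 * u5 + tau * u4)) * theta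
        + u3 * k2 * (k4 * kappa + tau * phi)) := by
    have h3 : 0 ≤ k3 := hk3p.le
    have h4 : 0 ≤ k4 := hk4p.le
    positivity
  have halt : alpha ≤ k5 := by rw [hk5]; linarith
  have hkey : (((gamma * k3 + kappa * u4) * k4 + phi * (k3 * u5 + tau * u4)) * theta
        + u3 * k2 * (k4 * kappa + tau * phi)) * alpha < k1 * k2 * k3 * k4 * k5 := by
    calc (((gamma * k3 + kappa * u4) * k4 + phi * (k3 * u5 + tau * u4)) * theta
        + u3 * k2 * (k4 * kappa + tau * phi)) * alpha
        ≤ (((gamma * k3 + kappa * u4) * k4 + phi * (k3 * u5 + tau * u4)) * theta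
        + u3 * k2 * (k4 * kappa + tau * phi)) * k5 := mul_le_mul_of_nonneg_left halt hBnn
      _ < k1 * k2 * k3 * k4 * k5 := mul_lt_mul_of_pos_right hB hk5p
  have hdneg : d < 0 := by
    rw [hd]
    have hpos : 0 < (1 - delta) * theta * (1 - u2) * beta ^ 2 := by
      have h1 : 0 < 1 - delta := by linarith
      have h2 : 0 < 1 - u2 := by linarith
      positivity
    exact mul_neg_of_pos_of_neg hpos (by linarith)
  refine ⟨hdneg, ?_⟩
  -- key algebraic identity for k6
  have hk6' : k6 * ((u1 + mu) * k3 * k4 * k5)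
      = lam * k3 * k4 * k5 + alpha * lam' * kappa * k4 + alpha * lam' * phi * tau := by
    rw [hk6]; field_simp
  have hQ : (0:ℝ) < (u1 + mu) * k3 * k4 * k5 := by positivity
  set M := mu * (1 - u2) + (1 - delta) * u1 with hM
  have hR0' : 1 < R0 ↔ k1 * k2 * mu < theta * beta * k6 * M := by
    rw [hR0, lt_div_iff₀ (by positivity), one_mul]
  have hfid : f = theta * (theta * beta * M *
      (lam * k3 * k4 * k5 + alpha * lam' * kappa * k4 + alpha * lam' * phi * tau)
      - k1 * k2 * mu * ((u1 + mu) * k3 * k4 * k5)) := by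
    rw [hf, hM]; ring
  have hstep : k1 * k2 * mu < theta * beta * k6 * M ↔ 0 < f := by
    rw [← mul_lt_mul_iff_of_pos_right hQ]
    have hrhs : theta * beta * k6 * M * ((u1 + mu) * k3 * k4 * k5)
        = theta * beta * M * (lam * k3 * k4 * k5 + alpha * lam' * kappa * k4 + alpha * lam' * phi * tau) := by
      calc theta * beta * k6 * M * ((u1 + mu) * k3 * k4 * k5)
          = theta * beta * M * (k6 * ((u1 + mu) * k3 * k4 * k5)) := by ring
        _ = _ := by rw [hk6']
    rw [hrhs, hfid]
    constructor
    · intro h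
      exact mul_pos htheta (sub_pos.mpr h)
    · intro h
      have h2 : 0 < theta * beta * M *
          (lam * k3 * k4 * k5 + alpha * lam' * kappa * k4 + alpha * lam' * phi * tau)
          - k1 * k2 * mu * ((u1 + mu) * k3 * k4 * k5) := by
        by_contra hcon
        push_neg at hcon
        have := mul_nonpos_of_nonneg_of_nonpos htheta.le hcon
        linarith
      exact sub_pos.mp h2
  rw [hR0', hstep]
  constructor
  · intro hfpos
    exact mul_neg_of_pos_of_neg hfpos hdneg
  · intro hfd
    by_contra hcon
    push_neg at hcon
    have h4 := mul_nonneg (neg_nonneg.mpr hcon) (neg_nonneg.mpr hdneg.le)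
    rw [neg_mul_neg] at h4
    exact absurd hfd (not_lt.mpr h4)
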